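/- For each 1 ≤ i < p the coefficients g_i(m) are uniquely determined by g and m, and the resulting maps g_i : M → M are 𝔽_p-linear; moreover, setting g₀ = id_M and g_i = 0 for i ≥ p, for every i ≥ 0 one has g_i(M) ⊆ (g − id)^i(M), the image of the i-fold composite of the linear map g − id. (Proposition 3.1(a),(b).) -/

import Mathlib

open Finset Polynomial

lemma aux_vandermonde {p : ℕ} [Fact p.Prime] {M : Type*} [AddCommGroup M] [Module (ZMod p) M]
    (a : ℕ → M) (h : ∀ x : ZMod p, ∑ i ∈ Finset.range p, x ^ i • a i = 0) :
    ∀ i < p, a i = 0 := by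
  set v : Fin p → ZMod p := fun i => ((i : ℕ) : ZMod p) with hv
  have hvinj : Function.Injective v := by
    intro i j hij
    have := congrArg ZMod.val hij
    rwa [hv, ZMod.val_cast_of_lt i.2, ZMod.val_cast_of_lt j.2, ← Fin.ext_iff] at this
  set V : Matrix (Fin p) (Fin p) (ZMod p) := Matrix.vandermonde v with hV
  have hdet : IsUnit V.det := by
    rw [hV, Matrix.det_vandermonde, isUnit_iff_ne_zero]
    rw [Finset.prod_ne_zero_iff]
    intro i _
    rw [Finset.prod_ne_zero_iff]
    intro j hj
    exact sub_ne_zero.mpr fun hc => (Finset.mem_Ioi.mp hj).ne' (hvinj hc)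
  have hinv : V⁻¹ * V = 1 := Matrix.nonsing_inv_mul V hdet
  have key : ∀ j : Fin p, ∑ k : Fin p, V j k • a k = 0 := by
    intro j
    have h2 := h (v j)
    rw [← Fin.sum_univ_eq_sum_range (fun i => (v j) ^ i • a i) p] at h2
    simpa [hV, Matrix.vandermonde_apply] using h2
  intro i hi
  set i' : Fin p := ⟨i, hi⟩
  have : a i = ∑ k : Fin p, (1 : Matrix (Fin p) (Fin p) (ZMod p)) i' k • a k := by
    simp [Matrix.one_apply, Finset.sum_ite_eq]; rfl
  rw [this, ← hinv]
  calc ∑ k : Fin p, (V⁻¹ * V) i' k • a k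
      = ∑ k : Fin p, ∑ j : Fin p, (V⁻¹ i' j * V j k) • a k := by
        simp [Matrix.mul_apply, Finset.sum_smul]
    _ = ∑ j : Fin p, V⁻¹ i' j • ∑ k : Fin p, V j k • a k := by
        rw [Finset.sum_comm]
        simp [Finset.smul_sum, smul_smul]
    _ = 0 := by simp [key]

-- helper: reduce an all-x statement with Ico sums to aux_vandermonde
lemma aux_ico {p : ℕ} [Fact p.Prime] {M : Type*} [AddCommGroup M] [Module (ZMod p) M]
    (b : ℕ → M) (h : ∀ n : ℕ, ∑ i ∈ Finset.Ico 1 p, ((n : ZMod p)) ^ i • b i = 0) :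
    ∀ i ∈ Finset.Ico 1 p, b i = 0 := by
  have hp : 0 < p := (Fact.out : p.Prime).pos
  set a : ℕ → M := fun j => if j = 0 then 0 else b j with ha
  have key : ∀ x : ZMod p, ∑ i ∈ Finset.range p, x ^ i • a i = 0 := by
    intro x
    obtain ⟨n, rfl⟩ := (ZMod.natCast_rightInverse (n := p)).surjective x
    rw [Finset.range_eq_Ico, Finset.sum_eq_sum_Ico_succ_bot hp]
    have : ∑ i ∈ Finset.Ico 1 p, ((n : ZMod p)) ^ i • a i
        = ∑ i ∈ Finset.Ico 1 p, ((n : ZMod p)) ^ i • b i := by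
      refine Finset.sum_congr rfl fun i hi => ?_
      have : i ≠ 0 := by have := (Finset.mem_Ico.mp hi).1; omega
      simp [ha, this]
    rw [this, h n]
    simp [ha]
  intro i hi
  have h2 := aux_vandermonde a key i (Finset.mem_Ico.mp hi).2
  have : i ≠ 0 := by have := (Finset.mem_Ico.mp hi).1; omega
  simpa [ha, this] using h2

theorem stmt_4 (p : ℕ) [Fact p.Prime] (hp : 2 < p)
    (M : Type*) [AddCommGroup M] [Module (ZMod p) M]
    (g : M →ₗ[ZMod p] M) (hgp : g ^ p = 1)
    (gc : ℕ → M → M)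
    (hgc : ∀ m : M, ∀ n : ℕ,
      (g ^ n) m = m + ∑ i ∈ Finset.Ico 1 p, ((n : ZMod p)) ^ i • gc i m) :
    (∀ gc' : ℕ → M → M,
        (∀ m : M, ∀ n : ℕ,
          (g ^ n) m = m + ∑ i ∈ Finset.Ico 1 p, ((n : ZMod p)) ^ i • gc' i m) →
        ∀ i ∈ Finset.Ico 1 p, ∀ m : M, gc' i m = gc i m) ∧
    (∀ i ∈ Finset.Ico 1 p, IsLinearMap (ZMod p) (gc i)) ∧
    (∀ i : ℕ, ∀ m : M,
      (if i = 0 then m else if i < p then gc i m else 0) ∈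
        LinearMap.range ((g - 1) ^ i)) := by
  have hp' : p.Prime := Fact.out
  -- (a) uniqueness
  have uniq : ∀ gc' : ℕ → M → M,
      (∀ m : M, ∀ n : ℕ,
        (g ^ n) m = m + ∑ i ∈ Finset.Ico 1 p, ((n : ZMod p)) ^ i • gc' i m) →
      ∀ i ∈ Finset.Ico 1 p, ∀ m : M, gc' i m = gc i m := by
    intro gc' hgc' i hi m
    have key : ∀ n : ℕ,
        ∑ j ∈ Finset.Ico 1 p, ((n : ZMod p)) ^ j • (gc' j m - gc j m) = 0 := by
      intro n
      have h1 := hgc m n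
      have h2 := hgc' m n
      have h3 : ∑ j ∈ Finset.Ico 1 p, ((n : ZMod p)) ^ j • gc' j m
          = ∑ j ∈ Finset.Ico 1 p, ((n : ZMod p)) ^ j • gc j m :=
        add_left_cancel (h2.symm.trans h1)
      simp [smul_sub, Finset.sum_sub_distrib, h3]
    have := aux_ico (fun j => gc' j m - gc j m) key i hi
    exact sub_eq_zero.mp this
  refine ⟨uniq, ?_, ?_⟩
  · -- (linearity)
    intro i hi
    constructor
    · intro m m'
      have key : ∀ n : ℕ, ∑ j ∈ Finset.Ico 1 p,
          ((n : ZMod p)) ^ j • (gc j (m + m') - (gc j m + gc j m')) = 0 := by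
        intro n
        have h1 := hgc m n
        have h2 := hgc m' n
        have h3 := hgc (m + m') n
        have h4 : (g ^ n) (m + m') = (g ^ n) m + (g ^ n) m' := map_add _ _ _
        rw [h1, h2, h3] at h4
        have h5 : ∑ j ∈ Finset.Ico 1 p, ((n : ZMod p)) ^ j • gc j (m + m')
            = ∑ j ∈ Finset.Ico 1 p, ((n : ZMod p)) ^ j • gc j m
              + ∑ j ∈ Finset.Ico 1 p, ((n : ZMod p)) ^ j • gc j m' := by
          have h4' : m + m' + ∑ j ∈ Finset.Ico 1 p, ((n : ZMod p)) ^ j • gc j (m + m')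
              = m + m' + (∑ j ∈ Finset.Ico 1 p, ((n : ZMod p)) ^ j • gc j m
                + ∑ j ∈ Finset.Ico 1 p, ((n : ZMod p)) ^ j • gc j m') := by
            rw [h4]; abel
          exact add_left_cancel h4'
        have h6 : ∑ j ∈ Finset.Ico 1 p, ((n : ZMod p)) ^ j • (gc j (m + m') - (gc j m + gc j m'))
            = ∑ j ∈ Finset.Ico 1 p, ((n : ZMod p)) ^ j • gc j (m + m')
              - (∑ j ∈ Finset.Ico 1 p, ((n : ZMod p)) ^ j • gc j m
                + ∑ j ∈ Finset.Ico 1 p, ((n : ZMod p)) ^ j • gc j m') := by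
          simp [smul_sub, smul_add, Finset.sum_sub_distrib, Finset.sum_add_distrib]
        rw [h6, h5, sub_self]
      have := aux_ico _ key i hi
      have := sub_eq_zero.mp this
      simpa using this
    · intro c m
      have key : ∀ n : ℕ, ∑ j ∈ Finset.Ico 1 p,
          ((n : ZMod p)) ^ j • (gc j (c • m) - c • gc j m) = 0 := by
        intro n
        have h1 := hgc m n
        have h3 := hgc (c • m) n
        have h4 : (g ^ n) (c • m) = c • (g ^ n) m := map_smul _ _ _
        rw [h1, h3] at h4
        have h5 : ∑ j ∈ Finset.Ico 1 p, ((n : ZMod p)) ^ j • gc j (c • m)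
            = ∑ j ∈ Finset.Ico 1 p, ((n : ZMod p)) ^ j • (c • gc j m) := by
          have h6 : c • (m + ∑ j ∈ Finset.Ico 1 p, ((n : ZMod p)) ^ j • gc j m)
              = c • m + ∑ j ∈ Finset.Ico 1 p, ((n : ZMod p)) ^ j • (c • gc j m) := by
            rw [smul_add, Finset.smul_sum]
            congr 1
            refine Finset.sum_congr rfl fun j _ => ?_
            rw [smul_comm]
          rw [h6] at h4
          exact add_left_cancel h4
        simp [smul_sub, Finset.sum_sub_distrib, h5]
      have := aux_ico _ key i hi
      exact sub_eq_zero.mp this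
  · -- (b)
    set f : M →ₗ[ZMod p] M := g - 1 with hf
    have hgf : f + 1 = g := by rw [hf]; abel
    set Q : ℕ → Polynomial (ZMod p) :=
      fun k => Polynomial.C (((k.factorial : ZMod p))⁻¹)
        * ∏ j ∈ Finset.range k, (Polynomial.X - Polynomial.C ((j : ℕ) : ZMod p)) with hQ
    have hfac : ∀ k < p, ((k.factorial : ZMod p)) ≠ 0 := by
      intro k hk hc
      rw [ZMod.natCast_eq_zero_iff] at hc
      exact absurd ((Nat.Prime.dvd_factorial hp').mp hc) (by omega)
    have hdeg : ∀ k, (Q k).natDegree ≤ k := by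
      intro k
      refine (Polynomial.natDegree_C_mul_le _ _).trans ?_
      refine (Polynomial.natDegree_prod_le _ _).trans ?_
      have h1 : ∑ j ∈ Finset.range k, (Polynomial.X - Polynomial.C ((j : ℕ) : ZMod p)).natDegree
          ≤ ∑ _j ∈ Finset.range k, 1 :=
        Finset.sum_le_sum (fun j _ => Polynomial.natDegree_X_sub_C_le ((j : ℕ) : ZMod p))
      simpa using h1
    have hQeval : ∀ n < p, ∀ k < p, (Q k).eval ((n : ℕ) : ZMod p) = ((n.choose k : ℕ) : ZMod p) := by
      intro n hn k hk
      have hfk := hfac k hk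
      have hprod : ∏ j ∈ Finset.range k, (((n : ℕ) : ZMod p) - ((j : ℕ) : ZMod p))
          = ((n.descFactorial k : ℕ) : ZMod p) := by
        rcases le_or_gt k n with hkn | hkn
        · rw [Nat.descFactorial_eq_prod_range, Nat.cast_prod]
          refine Finset.prod_congr rfl fun j hj => ?_
          have : j ≤ n := le_trans (Nat.le_of_lt_succ (Nat.lt_succ_of_lt (Finset.mem_range.mp hj))) hkn
          rw [Nat.cast_sub this]
        · rw [Nat.descFactorial_eq_zero_iff_lt.mpr hkn, Nat.cast_zero]
          exact Finset.prod_eq_zero (Finset.mem_range.mpr hkn) (by simp)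
      rw [hQ]
      simp only [Polynomial.eval_mul, Polynomial.eval_C, Polynomial.eval_prod,
        Polynomial.eval_sub, Polynomial.eval_X]
      rw [hprod, Nat.descFactorial_eq_factorial_mul_choose, Nat.cast_mul, ← mul_assoc,
        inv_mul_cancel₀ hfk, one_mul]
    have hQ0 : ∀ k, (Q k).coeff 0 = if k = 0 then 1 else 0 := by
      intro k
      cases k with
      | zero => simp [hQ]
      | succ k =>
        have hev : Polynomial.eval (0 : ZMod p)
            (∏ j ∈ Finset.range (k + 1), (Polynomial.X - Polynomial.C ((j : ℕ) : ZMod p))) = 0 := by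
          rw [Polynomial.eval_prod]
          exact Finset.prod_eq_zero (Finset.mem_range.mpr (Nat.succ_pos k)) (by simp)
        rw [if_neg (Nat.succ_ne_zero k), Polynomial.coeff_zero_eq_eval_zero, hQ]
        rw [Polynomial.eval_mul, hev, mul_zero]
    set gc' : ℕ → M → M := fun i m => ∑ k ∈ Finset.range p, (Q k).coeff i • (f ^ k) m with hgc'def
    -- binomial expansion
    have hbin : ∀ n : ℕ, (g : M →ₗ[ZMod p] M) ^ n
        = ∑ k ∈ Finset.range (n + 1), (n.choose k) • f ^ k := by
      intro n
      rw [← hgf, Commute.add_pow (Commute.one_right f)]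
      refine Finset.sum_congr rfl fun k _ => ?_
      rw [one_pow, mul_one, ← (Nat.cast_commute (n.choose k) (f ^ k)).eq, ← nsmul_eq_mul]
    have key2 : ∀ n < p, ∀ m : M, (g ^ n) m
        = ∑ k ∈ Finset.range p, (Q k).eval ((n : ℕ) : ZMod p) • (f ^ k) m := by
      intro n hn m
      rw [hbin n]
      have hsub : Finset.range (n + 1) ⊆ Finset.range p := by
        intro x hx; simp only [Finset.mem_range] at hx ⊢; omega
      rw [LinearMap.sum_apply]
      have : ∀ k ∈ Finset.range p, ((n.choose k) • f ^ k) m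
          = (Q k).eval ((n : ℕ) : ZMod p) • (f ^ k) m := by
        intro k hk
        rw [hQeval n hn k (Finset.mem_range.mp hk), LinearMap.smul_apply,
          Nat.cast_smul_eq_nsmul]
      rw [Finset.sum_subset hsub ?_]
      · exact Finset.sum_congr rfl this
      · intro k _ hk
        rw [Nat.choose_eq_zero_of_lt (by simp at hk; omega), zero_smul, LinearMap.zero_apply]
    have key3 : ∀ (n : ℕ) (m : M), (g ^ n) m
        = ∑ k ∈ Finset.range p, (Q k).eval ((n : ℕ) : ZMod p) • (f ^ k) m := by
      intro n m
      have hmod : g ^ n = g ^ (n % p) := by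
        conv_lhs => rw [← Nat.mod_add_div n p]
        rw [pow_add, pow_mul, hgp, one_pow, mul_one]
      have hcast : ((n % p : ℕ) : ZMod p) = ((n : ℕ) : ZMod p) := ZMod.natCast_mod n p
      rw [hmod, key2 (n % p) (Nat.mod_lt n hp'.pos) m, hcast]
    -- gc' 0 m = m
    have hgc'0 : ∀ m : M, gc' 0 m = m := by
      intro m
      rw [hgc'def]
      simp only [hQ0]
      rw [Finset.sum_eq_single 0]
      · simp
      · intro k _ hk; simp [hk]
      · intro hk; exact absurd (Finset.mem_range.mpr hp'.pos) hk
    -- gc' satisfies the defining identity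
    have key4 : ∀ (m : M) (n : ℕ),
        (g ^ n) m = m + ∑ i ∈ Finset.Ico 1 p, ((n : ZMod p)) ^ i • gc' i m := by
      intro m n
      have hsum : ∑ i ∈ Finset.range p, ((n : ZMod p)) ^ i • gc' i m
          = ∑ k ∈ Finset.range p, (Q k).eval ((n : ℕ) : ZMod p) • (f ^ k) m := by
        rw [hgc'def]
        simp only [Finset.smul_sum]
        rw [Finset.sum_comm]
        refine Finset.sum_congr rfl fun k hk => ?_
        rw [Polynomial.eval_eq_sum_range' (lt_of_le_of_lt (hdeg k) (Finset.mem_range.mp hk)),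
          Finset.sum_smul]
        refine Finset.sum_congr rfl fun i _ => ?_
        rw [smul_smul, mul_comm]
      rw [key3 n m, ← hsum, Finset.range_eq_Ico, Finset.sum_eq_sum_Ico_succ_bot hp'.pos]
      rw [pow_zero, one_smul, hgc'0]
    -- conclude
    intro i m
    by_cases h0 : i = 0
    · subst h0
      simp only [if_pos rfl, pow_zero]
      exact ⟨m, rfl⟩
    · rw [if_neg h0]
      by_cases hlt : i < p
      · rw [if_pos hlt]
        have hieq : gc i m = gc' i m :=
          (uniq gc' key4 i (Finset.mem_Ico.mpr ⟨by omega, hlt⟩) m).symm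
        rw [hieq, hgc'def]
        refine Submodule.sum_mem _ fun k hk => ?_
        by_cases hki : k < i
        · rw [Polynomial.coeff_eq_zero_of_natDegree_lt (lt_of_le_of_lt (hdeg k) hki), zero_smul]
          exact Submodule.zero_mem _
        · refine Submodule.smul_mem _ _ ?_
          refine ⟨(f ^ (k - i)) m, ?_⟩
          rw [← Module.End.mul_apply, ← pow_add, hf, Nat.add_sub_cancel' (le_of_not_gt hki)]
      · rw [if_neg hlt]
        exact Submodule.zero_mem _
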